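/- Let N : (0,∞) → ℕ be nonincreasing and integrable at infinity, let Λ(ε) := ∫_ε^∞ N(a) da, and suppose 2ε·Λ(ε) → Q as ε → 0 with error O(ε) (i.e., |2εΛ(ε) − Q| ≤ Cε). Then 2ε²N(ε) → Q as ε → 0; more precisely, for every small δ > 0, Q/(1+δ) + O(ε) ≤ 2ε²N(ε) ≤ Q/(1−δ) + O(ε). -/

import Mathlib

open Set MeasureTheory

private lemma key_bounds (N : ℝ → ℕ)
    (hmono : AntitoneOn (fun a => (N a : ℝ)) (Ioi (0:ℝ)))
    (hint : ∀ ε > (0:ℝ), IntegrableOn (fun a => (N a : ℝ)) (Ioi ε))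
    {a b : ℝ} (ha : 0 < a) (hab : a < b) :
    (N b : ℝ) * (b - a) ≤ (∫ x in Ioi a, (N x : ℝ)) - ∫ x in Ioi b, (N x : ℝ) ∧
    (∫ x in Ioi a, (N x : ℝ)) - ∫ x in Ioi b, (N x : ℝ) ≤ (N a : ℝ) * (b - a) := by
  have hb : 0 < b := ha.trans hab
  have hIa := hint a ha
  have hIoc : IntegrableOn (fun x => (N x : ℝ)) (Ioc a b) :=
    hIa.mono_set Ioc_subset_Ioi_self
  have hsplit : (∫ x in Ioi a, (N x : ℝ))
      = (∫ x in Ioc a b, (N x : ℝ)) + ∫ x in Ioi b, (N x : ℝ) := by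
    rw [← setIntegral_union (Ioc_disjoint_Ioi le_rfl) measurableSet_Ioi hIoc (hint b hb),
      Ioc_union_Ioi_eq_Ioi hab.le]
  have hvol : (volume (Ioc a b)).toReal = b - a := by
    rw [Real.volume_Ioc, ENNReal.toReal_ofReal (by linarith)]
  have hconst : ∀ c : ℝ, (∫ _ in Ioc a b, c) = c * (b - a) := by
    intro c
    rw [setIntegral_const, measureReal_def, hvol, smul_eq_mul, mul_comm]
  have hconstInt : ∀ c : ℝ, IntegrableOn (fun _ => c) (Ioc a b) := by
    intro c
    exact integrableOn_const (by rw [Real.volume_Ioc]; exact ENNReal.ofReal_ne_top)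
  constructor
  · have h1 : (∫ _ in Ioc a b, (N b : ℝ)) ≤ ∫ x in Ioc a b, (N x : ℝ) := by
      apply setIntegral_mono_on (hconstInt _) hIoc measurableSet_Ioc
      intro x hx
      exact hmono (mem_Ioi.2 (ha.trans hx.1)) (mem_Ioi.2 hb) hx.2
    rw [hconst] at h1
    linarith [hsplit, h1]
  · have h1 : (∫ x in Ioc a b, (N x : ℝ)) ≤ ∫ _ in Ioc a b, (N a : ℝ) := by
      apply setIntegral_mono_on hIoc (hconstInt _) measurableSet_Ioc
      intro x hx
      exact hmono (mem_Ioi.2 ha) (mem_Ioi.2 (ha.trans hx.1)) hx.1.le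
    rw [hconst] at h1
    linarith [hsplit, h1]

private lemma main_bound (N : ℝ → ℕ) (Q C : ℝ)
    (hmono : AntitoneOn (fun a => (N a : ℝ)) (Ioi (0:ℝ)))
    (hint : ∀ ε > (0:ℝ), IntegrableOn (fun a => (N a : ℝ)) (Ioi ε))
    (hΛ : ∀ ε > (0:ℝ), |2 * ε * (∫ a in Ioi ε, (N a : ℝ)) - Q| ≤ C * ε)
    {δ : ℝ} (hδ0 : 0 < δ) (hδ1 : δ < 1) :
    ∀ ε > (0:ℝ),
      Q / (1 + δ) - (2 * C / δ) * ε ≤ 2 * ε ^ 2 * (N ε : ℝ) ∧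
      2 * ε ^ 2 * (N ε : ℝ) ≤ Q / (1 - δ) + (2 * C / δ) * ε := by
  intro ε hε
  have h1δ : (0:ℝ) < 1 + δ := by linarith
  have h1δ' : (0:ℝ) < 1 - δ := by linarith
  set L1 : ℝ := ∫ a in Ioi ε, (N a : ℝ) with hL1
  set L2 : ℝ := ∫ a in Ioi (ε * (1 + δ)), (N a : ℝ) with hL2
  set L3 : ℝ := ∫ a in Ioi (ε * (1 - δ)), (N a : ℝ) with hL3
  have hB := abs_le.1 (hΛ ε hε)
  have hC := abs_le.1 (hΛ (ε * (1 + δ)) (by positivity))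
  have hD := abs_le.1 (hΛ (ε * (1 - δ)) (by positivity))
  constructor
  · -- lower bound, interval [ε, ε(1+δ)]
    have hk := (key_bounds N hmono hint hε (by nlinarith : ε < ε * (1 + δ))).2
    -- hk : L1 - L2 ≤ N ε * (ε(1+δ) - ε)
    have p1 : 2 * ε * (1 + δ) * (L1 - L2) ≤ 2 * ε * (1 + δ) * ((N ε : ℝ) * (ε * (1 + δ) - ε)) :=
      mul_le_mul_of_nonneg_left hk (by positivity)
    have p2 : (1 + δ) * (Q - C * ε) ≤ (1 + δ) * (2 * ε * L1) :=
      mul_le_mul_of_nonneg_left (by linarith [hB.1]) h1δ.le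
    have key : Q * δ - 2 * C * (1 + δ) * ε ≤ (2 * ε ^ 2 * (N ε : ℝ)) * (δ * (1 + δ)) := by
      nlinarith [hC.2, p1, p2]
    have heq : Q / (1 + δ) - (2 * C / δ) * ε
        = (Q * δ - 2 * C * (1 + δ) * ε) / (δ * (1 + δ)) := by
      field_simp
    rw [heq, div_le_iff₀ (by positivity)]
    linarith [key]
  · -- upper bound, interval [ε(1-δ), ε]
    have hk := (key_bounds N hmono hint (by positivity : 0 < ε * (1 - δ))
      (by nlinarith : ε * (1 - δ) < ε)).1
    -- hk : N ε * (ε - ε(1-δ)) ≤ L3 - L1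
    have p1 : 2 * ε * (1 - δ) * ((N ε : ℝ) * (ε - ε * (1 - δ))) ≤ 2 * ε * (1 - δ) * (L3 - L1) :=
      mul_le_mul_of_nonneg_left hk (by positivity)
    have p2 : (1 - δ) * (Q - C * ε) ≤ (1 - δ) * (2 * ε * L1) :=
      mul_le_mul_of_nonneg_left (by linarith [hB.1]) h1δ'.le
    have key : (2 * ε ^ 2 * (N ε : ℝ)) * (δ * (1 - δ)) ≤ Q * δ + 2 * C * (1 - δ) * ε := by
      nlinarith [hD.2, p1, p2]
    have heq : Q / (1 - δ) + (2 * C / δ) * ε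
        = (Q * δ + 2 * C * (1 - δ) * ε) / (δ * (1 - δ)) := by
      field_simp
    rw [heq, le_div_iff₀ (by positivity)]
    linarith [key]

/-- Tauberian step: if `N : (0,∞) → ℕ` is nonincreasing, integrable at infinity, and
`Λ(ε) = ∫_ε^∞ N(a) da` satisfies `|2εΛ(ε) - Q| ≤ Cε`, then `2ε²N(ε) → Q` as `ε → 0`;
more precisely for every small `δ > 0`,
`Q/(1+δ) + O(ε) ≤ 2ε²N(ε) ≤ Q/(1-δ) + O(ε)`. -/
theorem tauberian_barsCount (N : ℝ → ℕ) (Q C : ℝ)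
    (hmono : AntitoneOn (fun a => (N a : ℝ)) (Ioi (0:ℝ)))
    (hint : ∀ ε > (0:ℝ), IntegrableOn (fun a => (N a : ℝ)) (Ioi ε))
    (hΛ : ∀ ε > (0:ℝ), |2 * ε * (∫ a in Ioi ε, (N a : ℝ)) - Q| ≤ C * ε) :
    Filter.Tendsto (fun ε => 2 * ε ^ 2 * (N ε : ℝ)) (nhdsWithin 0 (Ioi 0)) (nhds Q) ∧
    ∀ δ : ℝ, 0 < δ → δ < 1 → ∃ C' > (0:ℝ), ∀ ε > (0:ℝ),
      Q / (1 + δ) - C' * ε ≤ 2 * ε ^ 2 * (N ε : ℝ) ∧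
      2 * ε ^ 2 * (N ε : ℝ) ≤ Q / (1 - δ) + C' * ε := by
  have hC0 : 0 ≤ C := by
    have := hΛ 1 one_pos
    have h0 := abs_nonneg (2 * 1 * (∫ a in Ioi (1:ℝ), (N a : ℝ)) - Q)
    linarith
  constructor
  · rw [Metric.tendsto_nhdsWithin_nhds]
    intro η hη
    set δ : ℝ := min (1/2) (η / (8 * (|Q| + 1))) with hδdef
    have hQ1 : (0:ℝ) < |Q| + 1 := by positivity
    have hδ0 : 0 < δ := lt_min (by norm_num) (by positivity)
    have hδhalf : δ ≤ 1/2 := min_le_left _ _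
    have hδη : δ ≤ η / (8 * (|Q| + 1)) := min_le_right _ _
    have hδ1 : δ < 1 := by linarith
    have hmb := main_bound N Q C hmono hint hΛ hδ0 hδ1
    refine ⟨η / (2 * (2 * C / δ + 1)), by positivity, ?_⟩
    intro ε hεmem hεd
    rw [Real.dist_eq, sub_zero] at hεd
    have hε : 0 < ε := hεmem
    rw [abs_of_pos hε] at hεd
    have hεub : (2 * C / δ) * ε < η / 2 := by
      have h1 : (0:ℝ) < 2 * C / δ + 1 := by positivity
      have := (lt_div_iff₀ (by positivity : (0:ℝ) < 2 * (2 * C / δ + 1))).1 hεd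
      nlinarith [hε]
    obtain ⟨hlo, hhi⟩ := hmb ε hε
    rw [Real.dist_eq, abs_sub_lt_iff]
    have habs1 : Q ≤ |Q| := le_abs_self Q
    have habs2 : -Q ≤ |Q| := neg_le_abs Q
    have hQδ : 2 * |Q| * δ ≤ η / 4 := by
      have : δ * (8 * (|Q| + 1)) ≤ η := by
        rw [← le_div_iff₀ (by positivity)]; exact hδη
      nlinarith [abs_nonneg Q, hδ0.le]
    have hup : Q / (1 - δ) ≤ Q + 2 * |Q| * δ := by
      rw [div_le_iff₀ (by linarith : (0:ℝ) < 1 - δ)]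
      nlinarith [mul_nonneg hδ0.le (sub_nonneg.2 habs1),
        mul_nonneg hδ0.le (by nlinarith [mul_nonneg (abs_nonneg Q) (by linarith : (0:ℝ) ≤ 1 - 2*δ)] : (0:ℝ) ≤ |Q| - 2 * |Q| * δ)]
    have hdown : Q - 2 * |Q| * δ ≤ Q / (1 + δ) := by
      rw [le_div_iff₀ (by linarith : (0:ℝ) < 1 + δ)]
      nlinarith [mul_nonneg hδ0.le (sub_nonneg.2 habs1),
        mul_nonneg hδ0.le (abs_nonneg Q),
        mul_nonneg (mul_nonneg hδ0.le hδ0.le) (abs_nonneg Q)]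
    constructor
    · linarith
    · linarith
  · intro δ hδ0 hδ1
    refine ⟨2 * C / δ + 1, by positivity, ?_⟩
    intro ε hε
    obtain ⟨hlo, hhi⟩ := main_bound N Q C hmono hint hΛ hδ0 hδ1 ε hε
    constructor
    · nlinarith
    · nlinarith
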